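/- arXiv:math/0508068 — 2 statements merged into one kernel-verified Lean document; each statement's English description precedes it below -/
import Mathlib

section
/- Let W be a Coxeter group, J, J' ⊆ I, and y ∈ {}^{J'}W^{δ(J)} with y δ(J) = J' (i.e. y δ(j) y⁻¹ gives a length-preserving bijection from the simple reflections in δ(J) to those in J'). Then for every w ∈ W^{δ(J)} and u ∈ W_{δ(J)}, one has ℓ(w u y⁻¹) = ℓ(w y⁻¹) + ℓ(u). -/
open CoxeterSystem
set_option autoImplicit false

variable {B W : Type*} [Group W] {M : CoxeterMatrix B} (cs : CoxeterSystem M W)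

/-- The standard parabolic subgroup `W_J` generated by the simple reflections in `J`. -/
def CoxeterSystem.parabolic (J : Set B) : Subgroup W := Subgroup.closure (cs.simple '' J)

/-- The set `W^J` of minimal length representatives of the cosets `W/W_J`. -/
def CoxeterSystem.minRight (J : Set B) : Set W :=
  {w | ∀ j ∈ J, cs.length w < cs.length (w * cs.simple j)}

/-- The set `^J W` of minimal length representatives of the cosets `W_J\W`. -/
def CoxeterSystem.minLeft (J : Set B) : Set W :=
  {w | ∀ j ∈ J, cs.length w < cs.length (cs.simple j * w)}

/-- The Bruhat order: `v ≤ w` iff some reduced word for `w` has a sublist whose product is `v`. -/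
def CoxeterSystem.bruhatLE (v w : W) : Prop :=
  ∃ ω : List B, cs.IsReduced ω ∧ cs.wordProd ω = w ∧
    ∃ ω' : List B, ω'.Sublist ω ∧ cs.wordProd ω' = v

/-- The support of `w`: the indices of simple reflections occurring in a reduced word for `w`. -/
def CoxeterSystem.supp (w : W) : Set B :=
  {i | ∃ ω : List B, cs.IsReduced ω ∧ cs.wordProd ω = w ∧ i ∈ ω}

/-! ### Auxiliary development: the reflection cocycle -/

attribute [local instance 10] Classical.propDecidable

private lemma zmod2_cases : ∀ x : ZMod 2, x = 0 ∨ x = 1 := by decide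

private lemma zmod2_add_self : ∀ x : ZMod 2, x + x = 0 := by decide

private lemma zmod2_eq_of_add_eq_zero : ∀ x y : ZMod 2, x + y = 0 → x = y := by decide

private lemma zmod2_xox : ∀ x : ZMod 2, x + (1 + x) = 1 := by decide

private lemma conj_eq_iff' {G : Type*} [Group G] (g₁ g₂ x d : G) :
    g₁ * x * g₂ = d ↔ x = g₁⁻¹ * d * g₂⁻¹ := by
  constructor
  · intro h; rw [← h]; group
  · intro h; rw [h]; group

namespace CoxeterSystem

/-- The function underlying the permutation representation on `W × ZMod 2` used to define the
reflection cocycle. -/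
noncomputable def auxFun (i : B) : W × ZMod 2 → W × ZMod 2 :=
  fun p => (cs.simple i * p.1 * cs.simple i, p.2 + if p.1 = cs.simple i then 1 else 0)

lemma auxFun_involutive (i : B) : Function.Involutive (cs.auxFun i) := by
  rintro ⟨t, ε⟩
  have hss := cs.simple_mul_simple_self i
  have hcond : (cs.simple i * t * cs.simple i = cs.simple i) ↔ t = cs.simple i := by
    constructor
    · intro h
      have h1 : cs.simple i * (t * cs.simple i) = cs.simple i * 1 := by
        rw [← mul_assoc, h, mul_one]
      have h2 : t * cs.simple i = 1 := mul_left_cancel h1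
      rw [eq_inv_of_mul_eq_one_left h2, cs.inv_simple]
    · rintro rfl; rw [hss, one_mul]
  simp only [auxFun]
  refine Prod.ext ?_ ?_
  · show cs.simple i * (cs.simple i * t * cs.simple i) * cs.simple i = t
    calc cs.simple i * (cs.simple i * t * cs.simple i) * cs.simple i
        = (cs.simple i * cs.simple i) * t * (cs.simple i * cs.simple i) := by
          simp only [mul_assoc]
      _ = t := by rw [hss, one_mul, mul_one]
  · show (ε + if t = cs.simple i then 1 else 0)
        + (if cs.simple i * t * cs.simple i = cs.simple i then 1 else 0) = ε
    rw [if_congr hcond rfl rfl]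
    by_cases ht : t = cs.simple i
    · rw [if_pos ht, add_assoc, show (1 : ZMod 2) + 1 = 0 by decide, add_zero]
    · rw [if_neg ht, add_zero, add_zero]

/-- The permutation of `W × ZMod 2` associated to a simple reflection. -/
noncomputable def auxPerm (i : B) : Equiv.Perm (W × ZMod 2) :=
  Function.Involutive.toPerm _ (cs.auxFun_involutive i)

lemma auxPerm_apply (i : B) (p : W × ZMod 2) : cs.auxPerm i p = cs.auxFun i p := rfl

private lemma aux_dihedral (i i' : B) (r : ℕ) :
    ((cs.simple i * cs.simple i')⁻¹) ^ r * cs.simple i' * (cs.simple i * cs.simple i') ^ r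
      = cs.simple i' * (cs.simple i * cs.simple i') ^ (2 * r) := by
  set a := cs.simple i
  set b := cs.simple i'
  have ha := cs.simple_mul_simple_self i
  have hb := cs.simple_mul_simple_self i'
  have hstep : (a * b)⁻¹ * b * (a * b) = b * (a * b) ^ 2 := by
    rw [mul_inv_rev, cs.inv_simple, cs.inv_simple]
    show b * a * b * (a * b) = b * (a * b) ^ 2
    rw [pow_two]; group
  induction r with
  | zero => simp
  | succ r ih =>
    have hcomm : ((a * b) ^ 2) * (a * b) ^ r = (a * b) ^ r * ((a * b) ^ 2) := by
      rw [← pow_add, ← pow_add, Nat.add_comm]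
    calc ((a * b)⁻¹) ^ (r + 1) * b * (a * b) ^ (r + 1)
        = ((a * b)⁻¹) ^ r * ((a * b)⁻¹ * b * (a * b)) * (a * b) ^ r := by
          rw [pow_succ ((a * b)⁻¹), pow_succ' (a * b)]; simp only [mul_assoc]
      _ = ((a * b)⁻¹) ^ r * b * (((a * b) ^ 2) * (a * b) ^ r) := by
          rw [hstep]; simp only [mul_assoc]
      _ = ((a * b)⁻¹) ^ r * b * ((a * b) ^ r * ((a * b) ^ 2)) := by rw [hcomm]
      _ = (((a * b)⁻¹) ^ r * b * (a * b) ^ r) * ((a * b) ^ 2) := by simp only [mul_assoc]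
      _ = b * (a * b) ^ (2 * r) * (a * b) ^ 2 := by rw [ih]
      _ = b * (a * b) ^ (2 * (r + 1)) := by
          rw [mul_assoc, ← pow_add, show 2 * r + 2 = 2 * (r + 1) by ring]

private lemma aux_dihedral' (i i' : B) (r : ℕ) :
    ((cs.simple i * cs.simple i')⁻¹) ^ r * (cs.simple i' * cs.simple i * cs.simple i')
      * (cs.simple i * cs.simple i') ^ r
      = cs.simple i' * (cs.simple i * cs.simple i') ^ (2 * r + 1) := by
  set a := cs.simple i
  set b := cs.simple i'
  have hbab : b * a * b = (a * b)⁻¹ * b := by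
    rw [mul_inv_rev, cs.inv_simple, cs.inv_simple]
  have h1 := cs.aux_dihedral i i' (r + 1)
  have h2 : ((a * b)⁻¹) ^ (r + 1) * b * ((a * b) ^ (r + 1) * (a * b)⁻¹)
      = b * ((a * b) ^ (2 * (r + 1)) * (a * b)⁻¹) := by
    rw [← mul_assoc, h1, mul_assoc]
  have hpp : (a * b) ^ (r + 1) * (a * b)⁻¹ = (a * b) ^ r := by
    rw [pow_succ, mul_assoc, mul_inv_cancel, mul_one]
  have hpp2 : (a * b) ^ (2 * (r + 1)) * (a * b)⁻¹ = (a * b) ^ (2 * r + 1) := by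
    rw [show 2 * (r + 1) = (2 * r + 1) + 1 by ring, pow_succ, mul_assoc, mul_inv_cancel, mul_one]
  rw [hpp, hpp2] at h2
  rw [hbab, ← h2, pow_succ ((a * b)⁻¹)]
  simp only [mul_assoc]

private lemma auxPerm_pow (i i' : B) (r : ℕ) (t : W) (ε : ZMod 2) :
    ((cs.auxPerm i * cs.auxPerm i') ^ r) (t, ε) =
      ((cs.simple i * cs.simple i') ^ r * t * ((cs.simple i * cs.simple i')⁻¹) ^ r,
        ε + ∑ q ∈ Finset.range (2 * r),
          (if t = cs.simple i' * (cs.simple i * cs.simple i') ^ q then (1 : ZMod 2) else 0)) := by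
  set a := cs.simple i with ha
  set b := cs.simple i' with hb
  induction r with
  | zero => simp
  | succ r ih =>
    have hmul : ((cs.auxPerm i * cs.auxPerm i') ^ (r + 1)) (t, ε)
        = (cs.auxPerm i) ((cs.auxPerm i') (((cs.auxPerm i * cs.auxPerm i') ^ r) (t, ε))) := by
      rw [pow_succ' (cs.auxPerm i * cs.auxPerm i'), Equiv.Perm.mul_apply, Equiv.Perm.mul_apply]
    rw [hmul, ih, auxPerm_apply, auxPerm_apply, auxFun, auxFun]
    dsimp only
    rw [← ha, ← hb]
    set P := (a * b) ^ r with hP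
    set Q := ((a * b)⁻¹) ^ r with hQ
    set S := ∑ q ∈ Finset.range (2 * r), (if t = b * (a * b) ^ q then (1 : ZMod 2) else 0) with hS
    have hQP : Q = P⁻¹ := by rw [hQ, hP, inv_pow]
    have hd1 : Q * b * P = b * (a * b) ^ (2 * r) := cs.aux_dihedral i i' r
    have hd2 : Q * (b * a * b) * P = b * (a * b) ^ (2 * r + 1) := cs.aux_dihedral' i i' r
    have hiff1 : (P * t * Q = b) ↔ t = b * (a * b) ^ (2 * r) := by
      rw [conj_eq_iff', ← hd1, hQP]
      constructor
      · intro h; rw [h]; group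
      · intro h; rw [h]; group
    have hiff2 : (b * (P * t * Q) * b = a) ↔ t = b * (a * b) ^ (2 * r + 1) := by
      have hx : (b * (P * t * Q) * b = a) ↔ P * t * Q = b⁻¹ * a * b⁻¹ := conj_eq_iff' b b _ a
      rw [hx, hb, cs.inv_simple, ← hb, conj_eq_iff', ← hd2, hQP]
      constructor
      · intro h; rw [h]; group
      · intro h; rw [h]; group
    refine Prod.ext ?_ ?_
    · dsimp only
      rw [hP, hQ, pow_succ' (a * b), pow_succ ((a * b)⁻¹), mul_inv_rev,
        hb, cs.inv_simple, ← hb, ha, cs.inv_simple, ← ha]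
      simp only [mul_assoc]
    · dsimp only
      rw [if_congr hiff1 rfl rfl, if_congr hiff2 rfl rfl,
        show 2 * (r + 1) = (2 * r) + 1 + 1 by ring, Finset.sum_range_succ, Finset.sum_range_succ,
        ← hS]
      ring

lemma aux_liftable : CoxeterMatrix.IsLiftable M (fun i => (cs.auxPerm i)) := by
  intro i i'
  refine Equiv.ext fun p => ?_
  obtain ⟨t, ε⟩ := p
  rw [show ((fun i => cs.auxPerm i) i * (fun i => cs.auxPerm i) i') = cs.auxPerm i * cs.auxPerm i'
    from rfl]
  rw [cs.auxPerm_pow i i' (M i i') t ε]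
  have hp : (cs.simple i * cs.simple i') ^ M i i' = 1 := cs.simple_mul_simple_pow i i'
  have hp' : ((cs.simple i * cs.simple i')⁻¹) ^ M i i' = 1 := by rw [inv_pow, hp, inv_one]
  have hsum : (∑ q ∈ Finset.range (2 * M i i'),
      (if t = cs.simple i' * (cs.simple i * cs.simple i') ^ q then (1 : ZMod 2) else 0)) = 0 := by
    rw [two_mul, Finset.sum_range_add, ← Finset.sum_add_distrib]
    refine Finset.sum_eq_zero fun q _ => ?_
    rw [pow_add, hp, one_mul]
    exact zmod2_add_self _
  rw [hp, hp', hsum, add_zero, one_mul, mul_one]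
  rfl

/-- The permutation representation of `W` on `W × ZMod 2`. -/
noncomputable def auxHom : W →* Equiv.Perm (W × ZMod 2) :=
  cs.lift ⟨fun i => cs.auxPerm i, cs.aux_liftable⟩

/-- The reflection cocycle: `auxNu w t = 1` iff `t` is a right inversion of `w`. -/
noncomputable def auxNu (w t : W) : ZMod 2 := ((cs.auxHom w) (t, 0)).2

lemma auxHom_simple (i : B) : cs.auxHom (cs.simple i) = cs.auxPerm i :=
  cs.lift_apply_simple cs.aux_liftable i

private lemma auxHom_apply_word (ω : List B) (t : W) (ε : ZMod 2) :
    cs.auxHom (cs.wordProd ω) (t, ε)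
      = (cs.wordProd ω * t * (cs.wordProd ω)⁻¹, ε + cs.auxNu (cs.wordProd ω) t) := by
  induction ω generalizing ε with
  | nil =>
    simp only [wordProd_nil, map_one, Equiv.Perm.one_apply, auxNu, one_mul, inv_one, mul_one]
    rw [add_zero]
  | cons i ω ih =>
    have key : ∀ ε' : ZMod 2, cs.auxHom (cs.wordProd (i :: ω)) (t, ε')
        = (cs.simple i * (cs.wordProd ω * t * (cs.wordProd ω)⁻¹) * cs.simple i,
            ε' + (cs.auxNu (cs.wordProd ω) t
              + if cs.wordProd ω * t * (cs.wordProd ω)⁻¹ = cs.simple i then 1 else 0)) := by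
      intro ε'
      rw [wordProd_cons, map_mul, Equiv.Perm.mul_apply, ih ε', auxHom_simple, auxPerm_apply,
        auxFun]
      refine Prod.ext rfl ?_
      show (ε' + cs.auxNu (cs.wordProd ω) t) + _ = _
      rw [add_assoc]
    rw [key ε]
    refine Prod.ext ?_ ?_
    · show cs.simple i * (cs.wordProd ω * t * (cs.wordProd ω)⁻¹) * cs.simple i
        = cs.wordProd (i :: ω) * t * (cs.wordProd (i :: ω))⁻¹
      rw [wordProd_cons, mul_inv_rev, cs.inv_simple]
      group
    · show ε + _ = ε + cs.auxNu (cs.wordProd (i :: ω)) t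
      congr 1
      have := key 0
      rw [show cs.auxNu (cs.wordProd (i :: ω)) t = ((cs.auxHom (cs.wordProd (i :: ω))) (t, 0)).2
        from rfl, this, zero_add]

lemma auxHom_apply (w t : W) (ε : ZMod 2) :
    cs.auxHom w (t, ε) = (w * t * w⁻¹, ε + cs.auxNu w t) := by
  obtain ⟨ω, _, rfl⟩ := cs.exists_reduced_word' w
  exact cs.auxHom_apply_word ω t ε

lemma auxNu_cocycle (a b t : W) :
    cs.auxNu (a * b) t = cs.auxNu b t + cs.auxNu a (b * t * b⁻¹) := by
  have h : cs.auxHom (a * b) (t, 0) = cs.auxHom a (cs.auxHom b (t, 0)) := by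
    rw [map_mul, Equiv.Perm.mul_apply]
  rw [cs.auxHom_apply b t 0, cs.auxHom_apply a (b * t * b⁻¹) (0 + cs.auxNu b t),
    cs.auxHom_apply (a * b) t 0] at h
  have h2 := congrArg Prod.snd h
  simp only [zero_add] at h2
  exact h2

lemma auxNu_one (t : W) : cs.auxNu 1 t = 0 := by
  rw [auxNu, map_one, Equiv.Perm.one_apply]

lemma auxNu_simple (i : B) (t : W) :
    cs.auxNu (cs.simple i) t = if t = cs.simple i then 1 else 0 := by
  rw [auxNu, auxHom_simple, auxPerm_apply, auxFun, zero_add]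

lemma auxNu_inv (a t : W) : cs.auxNu a⁻¹ t = cs.auxNu a (a⁻¹ * t * a) := by
  have h := cs.auxNu_cocycle a a⁻¹ t
  rw [mul_inv_cancel, cs.auxNu_one, inv_inv] at h
  exact zmod2_eq_of_add_eq_zero _ _ h.symm

private lemma auxNu_ne_zero_mem (ω : List B) (t : W) (h : cs.auxNu (cs.wordProd ω) t ≠ 0) :
    t ∈ cs.rightInvSeq ω := by
  induction ω with
  | nil => exact absurd (by rw [wordProd_nil]; exact cs.auxNu_one t) h
  | cons i ω ih =>
    rw [wordProd_cons, cs.auxNu_cocycle (cs.simple i) (cs.wordProd ω) t, auxNu_simple] at h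
    rw [show cs.rightInvSeq (i :: ω)
      = ((cs.wordProd ω)⁻¹ * cs.simple i * cs.wordProd ω) :: cs.rightInvSeq ω from rfl]
    rw [List.mem_cons]
    by_cases hc : cs.wordProd ω * t * (cs.wordProd ω)⁻¹ = cs.simple i
    · left
      rw [← hc]; group
    · rw [if_neg hc, add_zero] at h
      exact Or.inr (ih h)

lemma auxNu_refl_self {t : W} (ht : cs.IsReflection t) : cs.auxNu t t = 1 := by
  obtain ⟨a, i, rfl⟩ := ht
  have e1 : a⁻¹ * (a * cs.simple i * a⁻¹) * a⁻¹⁻¹ = cs.simple i := by group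
  have e2 : cs.simple i * cs.simple i * (cs.simple i)⁻¹ = cs.simple i := by group
  have h1 := cs.auxNu_cocycle (a * cs.simple i) a⁻¹ (a * cs.simple i * a⁻¹)
  rw [show a * cs.simple i * a⁻¹ = (a * cs.simple i) * a⁻¹ from rfl] at h1
  rw [h1, e1]
  have h2 := cs.auxNu_cocycle a (cs.simple i) (cs.simple i)
  rw [e2] at h2
  rw [h2, cs.auxNu_simple i (cs.simple i), if_pos rfl]
  have e1' : a⁻¹ * (a * cs.simple i * a⁻¹) * a = cs.simple i := by group
  have h3 : cs.auxNu a⁻¹ ((a * cs.simple i) * a⁻¹) = cs.auxNu a (cs.simple i) := by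
    rw [cs.auxNu_inv a ((a * cs.simple i) * a⁻¹), e1']
  rw [h3]
  exact zmod2_xox _

lemma auxNu_eq_one_of {t : W} (ht : cs.IsReflection t) (w : W)
    (h : cs.auxNu w t = 1) : cs.length (w * t) < cs.length w := by
  obtain ⟨ω, hred, rfl⟩ := cs.exists_reduced_word' w
  have hmem : t ∈ cs.rightInvSeq ω :=
    cs.auxNu_ne_zero_mem ω t (by rw [h]; decide)
  exact (cs.isRightInversion_of_mem_rightInvSeq hred hmem).2

lemma auxNu_eq_one_iff {t : W} (ht : cs.IsReflection t) (w : W) :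
    cs.auxNu w t = 1 ↔ cs.length (w * t) < cs.length w := by
  constructor
  · exact cs.auxNu_eq_one_of ht w
  · intro h
    have hw : (w * t) * t = w := by
      rw [mul_assoc, ht.mul_self, mul_one]
    have h1 : cs.auxNu w t = cs.auxNu t t + cs.auxNu (w * t) (t * t * t⁻¹) := by
      conv_lhs => rw [← hw]
      exact cs.auxNu_cocycle (w * t) t t
    have e : t * t * t⁻¹ = t := by group
    rw [e, cs.auxNu_refl_self ht] at h1
    have h2 : cs.auxNu (w * t) t = 0 := by
      rcases zmod2_cases (cs.auxNu (w * t) t) with h' | h'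
      · exact h'
      · exfalso
        have := cs.auxNu_eq_one_of ht (w * t) h'
        rw [hw] at this
        omega
    rw [h1, h2, add_zero]

lemma auxNu_eq_zero_iff {t : W} (ht : cs.IsReflection t) (w : W) :
    cs.auxNu w t = 0 ↔ cs.length w < cs.length (w * t) := by
  have hne := ht.length_mul_left_ne w
  constructor
  · intro h
    have : ¬ cs.length (w * t) < cs.length w := by
      intro hlt
      have := (cs.auxNu_eq_one_iff ht w).mpr hlt
      rw [h] at this
      exact absurd this (by decide)
    omega
  · intro h
    rcases zmod2_cases (cs.auxNu w t) with h' | h'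
    · exact h'
    · exfalso
      have := (cs.auxNu_eq_one_iff ht w).mp h'
      omega

/-! ### Reduced words within a parabolic alphabet -/

lemma exists_reduced_word_subset (K : Set B) :
    ∀ (n : ℕ) (ω : List B), ω.length = n → (∀ b ∈ ω, b ∈ K) →
      ∃ ω' : List B, (∀ b ∈ ω', b ∈ K) ∧ cs.IsReduced ω' ∧ cs.wordProd ω' = cs.wordProd ω := by
  intro n
  induction n using Nat.strong_induction_on with
  | _ n ih =>
    intro ω hlen hK
    by_cases hred : cs.IsReduced ω
    · exact ⟨ω, hK, hred, rfl⟩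
    classical
    have hPlen : ¬ cs.IsReduced (ω.take ω.length) := by rwa [List.take_length]
    have hex : ∃ j, ¬ cs.IsReduced (ω.take j) := ⟨ω.length, hPlen⟩
    set j₀ := Nat.find hex with hj₀def
    have hj₀ : ¬ cs.IsReduced (ω.take j₀) := Nat.find_spec hex
    have hj₀le : j₀ ≤ ω.length := Nat.find_min' hex hPlen
    have hj₀pos : 0 < j₀ := by
      rcases Nat.eq_zero_or_pos j₀ with h | h
      · exfalso
        apply hj₀
        rw [h, List.take_zero]
        show cs.length (cs.wordProd []) = _
        rw [wordProd_nil, length_one, List.length_nil]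
      · exact h
    set j := j₀ - 1 with hjdef
    have hjlt : j < ω.length := by omega
    have hjred : cs.IsReduced (ω.take j) := by
      have := Nat.find_min hex (m := j) (by omega)
      rwa [not_not] at this
    set k := ω.get ⟨j, hjlt⟩ with hkdef
    have htake : ω.take j₀ = ω.take j ++ [k] := by
      rw [show j₀ = j + 1 by omega, List.take_succ, List.getElem?_eq_getElem hjlt]
      rfl
    set p := cs.wordProd (ω.take j) with hpdef
    have hp : cs.length p = j := by
      have : cs.length p = (ω.take j).length := hjred
      rwa [List.length_take, min_eq_left hjlt.le] at this
    have hπtake : cs.wordProd (ω.take j₀) = p * cs.simple k := by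
      rw [htake, wordProd_append, wordProd_singleton]
    have hlt : cs.length (p * cs.simple k) < cs.length p := by
      rcases cs.length_mul_simple p k with h | h
      · exfalso
        apply hj₀
        show cs.length (cs.wordProd (ω.take j₀)) = (ω.take j₀).length
        rw [hπtake, h, hp, List.length_take, min_eq_left hj₀le]
        omega
      · omega
    have hnu : cs.auxNu p (cs.simple k) = 1 :=
      (cs.auxNu_eq_one_iff (cs.isReflection_simple k) p).mpr hlt
    have hmem : cs.simple k ∈ cs.rightInvSeq (ω.take j) :=
      cs.auxNu_ne_zero_mem _ _ (by rw [hnu]; decide)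
    obtain ⟨l, hl, hel⟩ := List.mem_iff_getElem.mp hmem
    have hl' : l < (ω.take j).length := by
      rwa [cs.length_rightInvSeq] at hl
    have herase : p * cs.simple k = cs.wordProd ((ω.take j).eraseIdx l) := by
      have h1 := cs.wordProd_mul_getD_rightInvSeq (ω.take j) l
      rwa [List.getD_eq_getElem _ _ hl, hel] at h1
    set ω₂ := (ω.take j).eraseIdx l ++ ω.drop j₀ with hω₂def
    have hπ : cs.wordProd ω₂ = cs.wordProd ω := by
      conv_rhs => rw [← List.take_append_drop j₀ ω]
      rw [wordProd_append, wordProd_append, hπtake, herase]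
    have hlen₂ : ω₂.length < n := by
      have h1 : ((ω.take j).eraseIdx l).length + 1 = (ω.take j).length :=
        List.length_eraseIdx_add_one hl'
      have h2 : (ω.take j).length = j := by rw [List.length_take, min_eq_left hjlt.le]
      have h3 : (ω.drop j₀).length = ω.length - j₀ := List.length_drop
      rw [hω₂def, List.length_append]
      omega
    have hK₂ : ∀ b ∈ ω₂, b ∈ K := by
      intro b hb
      rcases List.mem_append.mp hb with h | h
      · exact hK b (List.take_sublist j ω |>.subset (List.eraseIdx_sublist _ l |>.subset h))
      · exact hK b (List.drop_sublist j₀ ω |>.subset h)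
    obtain ⟨ω', hω'K, hω'red, hω'π⟩ := ih ω₂.length (by omega) ω₂ rfl hK₂
    exact ⟨ω', hω'K, hω'red, hω'π.trans hπ⟩

lemma exists_word_of_mem_parabolic {K : Set B} {u : W} (hu : u ∈ cs.parabolic K) :
    ∃ ω : List B, (∀ b ∈ ω, b ∈ K) ∧ cs.wordProd ω = u := by
  induction hu using Subgroup.closure_induction with
  | mem x hx =>
    obtain ⟨i, hiK, rfl⟩ := hx
    exact ⟨[i], by simpa using hiK, cs.wordProd_singleton i⟩
  | one => exact ⟨[], by simp, cs.wordProd_nil⟩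
  | mul x y hx hy ihx ihy =>
    obtain ⟨ω₁, h1, h1π⟩ := ihx
    obtain ⟨ω₂, h2, h2π⟩ := ihy
    refine ⟨ω₁ ++ ω₂, ?_, by rw [wordProd_append, h1π, h2π]⟩
    intro b hb
    rcases List.mem_append.mp hb with h | h
    · exact h1 b h
    · exact h2 b h
  | inv x hx ihx =>
    obtain ⟨ω₁, h1, h1π⟩ := ihx
    exact ⟨ω₁.reverse, fun b hb => h1 b (List.mem_reverse.mp hb),
      by rw [wordProd_reverse, h1π]⟩

/-! ### Length additivity for minimal coset representatives -/

lemma length_mul_wordProd_of_min {K : Set B} (w₀ : W)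
    (hmin : ∀ ω : List B, (∀ b ∈ ω, b ∈ K) → cs.length w₀ ≤ cs.length (w₀ * cs.wordProd ω)) :
    ∀ ω : List B, (∀ b ∈ ω, b ∈ K) → cs.IsReduced ω →
      cs.length (w₀ * cs.wordProd ω) = cs.length w₀ + ω.length := by
  intro ω
  induction ω using List.reverseRecOn with
  | nil =>
    intro _ _
    simp [wordProd_nil]
  | append_singleton ω₀ k ih =>
    intro hK hred
    have hK₀ : ∀ b ∈ ω₀, b ∈ K := fun b hb => hK b (List.mem_append_left _ hb)
    have hkK : k ∈ K := hK k (by simp)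
    have hred₀ : cs.IsReduced ω₀ := by
      have := CoxeterSystem.IsReduced.take hred ω₀.length
      rwa [List.take_left] at this
    have hπ : cs.wordProd (ω₀ ++ [k]) = cs.wordProd ω₀ * cs.simple k := by
      rw [wordProd_append, wordProd_singleton]
    have hu₀ : cs.length (cs.wordProd ω₀) = ω₀.length := hred₀
    have hu₀k : cs.length (cs.wordProd ω₀ * cs.simple k) = ω₀.length + 1 := by
      have : cs.length (cs.wordProd (ω₀ ++ [k])) = (ω₀ ++ [k]).length := hred
      rwa [hπ, List.length_append, List.length_singleton] at this
    have hν1 : cs.auxNu (cs.wordProd ω₀) (cs.simple k) = 0 :=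
      (cs.auxNu_eq_zero_iff (cs.isReflection_simple k) _).mpr (by omega)
    have htrefl : cs.IsReflection (cs.wordProd ω₀ * cs.simple k * (cs.wordProd ω₀)⁻¹) :=
      ⟨cs.wordProd ω₀, k, rfl⟩
    have hν2 : cs.auxNu w₀ (cs.wordProd ω₀ * cs.simple k * (cs.wordProd ω₀)⁻¹) = 0 := by
      rcases zmod2_cases (cs.auxNu w₀ (cs.wordProd ω₀ * cs.simple k * (cs.wordProd ω₀)⁻¹))
        with h | h
      · exact h
      exfalso
      have hlt := cs.auxNu_eq_one_of htrefl w₀ h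
      have heq : w₀ * (cs.wordProd ω₀ * cs.simple k * (cs.wordProd ω₀)⁻¹)
          = w₀ * cs.wordProd (ω₀ ++ [k] ++ ω₀.reverse) := by
        rw [wordProd_append, wordProd_append, wordProd_singleton, wordProd_reverse]
      have hmem : ∀ b ∈ ω₀ ++ [k] ++ ω₀.reverse, b ∈ K := by
        intro b hb
        rcases List.mem_append.mp hb with h' | h'
        · rcases List.mem_append.mp h' with h'' | h''
          · exact hK₀ b h''
          · rw [List.mem_singleton.mp h'']; exact hkK
        · exact hK₀ b (List.mem_reverse.mp h')
      have := hmin (ω₀ ++ [k] ++ ω₀.reverse) hmem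
      rw [← heq] at this
      omega
    have hν3 : cs.auxNu (w₀ * cs.wordProd ω₀) (cs.simple k) = 0 := by
      rw [cs.auxNu_cocycle w₀ (cs.wordProd ω₀) (cs.simple k), hν1, hν2, add_zero]
    have h4 : cs.length (w₀ * cs.wordProd ω₀) < cs.length (w₀ * cs.wordProd ω₀ * cs.simple k) :=
      (cs.auxNu_eq_zero_iff (cs.isReflection_simple k) _).mp hν3
    have h5 := cs.length_mul_simple (w₀ * cs.wordProd ω₀) k
    have h6 : cs.length (w₀ * cs.wordProd ω₀) = cs.length w₀ + ω₀.length := ih hK₀ hred₀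
    rw [hπ, ← mul_assoc, List.length_append, List.length_singleton]
    omega

lemma length_mul_parabolic_word {K : Set B} (w : W)
    (hw : ∀ k ∈ K, cs.length w < cs.length (w * cs.simple k)) :
    ∀ ω : List B, (∀ b ∈ ω, b ∈ K) → cs.IsReduced ω →
      cs.length (w * cs.wordProd ω) = cs.length w + ω.length := by
  classical
  set S : Set ℕ := {n | ∃ ω : List B, (∀ b ∈ ω, b ∈ K) ∧ cs.length (w * cs.wordProd ω) = n}
    with hSdef
  have hSne : S.Nonempty := ⟨cs.length w, [], by simp, by rw [wordProd_nil, mul_one]⟩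
  obtain ⟨ω₁, hω₁K, hω₁⟩ := Nat.sInf_mem hSne
  set w₀ := w * cs.wordProd ω₁ with hw₀def
  have hmin : ∀ τ : List B, (∀ b ∈ τ, b ∈ K) → cs.length w₀ ≤ cs.length (w₀ * cs.wordProd τ) := by
    intro τ hτ
    have hmem : cs.length (w₀ * cs.wordProd τ) ∈ S := by
      refine ⟨ω₁ ++ τ, ?_, by rw [wordProd_append, ← mul_assoc]⟩
      intro b hb
      rcases List.mem_append.mp hb with h | h
      · exact hω₁K b h
      · exact hτ b h
    calc cs.length w₀ = sInf S := hω₁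
      _ ≤ _ := Nat.sInf_le hmem
  obtain ⟨ρ, hρK, hρred, hρπ⟩ := cs.exists_reduced_word_subset K ω₁.reverse.length ω₁.reverse rfl
    (fun b hb => hω₁K b (List.mem_reverse.mp hb))
  have hρinv : cs.wordProd ρ = (cs.wordProd ω₁)⁻¹ := by rw [hρπ, wordProd_reverse]
  have hwρ : w₀ * cs.wordProd ρ = w := by rw [hρinv, hw₀def]; group
  rcases List.eq_nil_or_concat ρ with hnil | ⟨ρ₁, k, hcons⟩
  · have hw₀w : w₀ = w := by rw [← hwρ, hnil, wordProd_nil, mul_one]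
    rw [← hw₀w]
    exact cs.length_mul_wordProd_of_min w₀ hmin
  · exfalso
    rw [List.concat_eq_append] at hcons
    subst hcons
    have hρ₁K : ∀ b ∈ ρ₁, b ∈ K := fun b hb => hρK b (List.mem_append_left _ hb)
    have hρ₁red : cs.IsReduced ρ₁ := by
      have := CoxeterSystem.IsReduced.take hρred ρ₁.length
      rwa [List.take_left] at this
    have e1 : cs.length w = cs.length w₀ + (ρ₁.length + 1) := by
      rw [← hwρ]
      have := cs.length_mul_wordProd_of_min w₀ hmin (ρ₁ ++ [k]) hρK hρred
      rwa [List.length_append, List.length_singleton] at this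
    have e2 : w * cs.simple k = w₀ * cs.wordProd ρ₁ := by
      rw [← hwρ, hw₀def, wordProd_append, wordProd_singleton]
      simp only [mul_assoc, cs.simple_mul_simple_self, mul_one]
    have e3 : cs.length (w * cs.simple k) = cs.length w₀ + ρ₁.length := by
      rw [e2]
      exact cs.length_mul_wordProd_of_min w₀ hmin ρ₁ hρ₁K hρ₁red
    have := hw k (hρK k (by simp))
    omega

end CoxeterSystem

/-- If `y ∈ {}^{J'}W^{δ(J)}` with `yδ(J) = J'`, then for `w ∈ W^{δ(J)}` and `u ∈ W_{δ(J)}`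
one has `ℓ(w u y⁻¹) = ℓ(w y⁻¹) + ℓ(u)`. -/
theorem length_wu_yinv (δI : B ≃ B) (J J' : Set B) (y : W)
    (hy : y ∈ cs.minLeft J' ∩ cs.minRight (δI '' J))
    (hconj : ∀ j ∈ J, ∃ j' ∈ J', y * cs.simple (δI j) * y⁻¹ = cs.simple j' ∧
      cs.length (y * cs.simple (δI j)) = cs.length y + 1)
    (w : W) (hw : w ∈ cs.minRight (δI '' J))
    (u : W) (hu : u ∈ cs.parabolic (δI '' J)) :
    cs.length (w * u * y⁻¹) = cs.length (w * y⁻¹) + cs.length u := by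
  classical
  obtain ⟨ω', hmemK, hπ'⟩ := cs.exists_word_of_mem_parabolic hu
  obtain ⟨ω, hωK, hωred, hωπ⟩ := cs.exists_reduced_word_subset (δI '' J) ω'.length ω' rfl hmemK
  have huω : cs.wordProd ω = u := by rw [hωπ, hπ']
  have hulen : cs.length u = ω.length := by rw [← huω]; exact hωred
  have main : ∀ τ : List B, (∀ b ∈ τ, b ∈ δI '' J) → cs.IsReduced τ →
      cs.length (w * cs.wordProd τ * y⁻¹) = cs.length (w * y⁻¹) + τ.length := by
    intro τ
    induction τ using List.reverseRecOn with
    | nil =>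
      intro _ _
      simp [wordProd_nil]
    | append_singleton τ₀ k ih =>
      intro hK hred
      have hK₀ : ∀ b ∈ τ₀, b ∈ δI '' J := fun b hb => hK b (List.mem_append_left _ hb)
      have hred₀ : cs.IsReduced τ₀ := by
        have := CoxeterSystem.IsReduced.take hred τ₀.length
        rwa [List.take_left] at this
      obtain ⟨j, hjJ, hjk⟩ := hK k (by simp)
      obtain ⟨j', hj'J', hcj, hlenyj⟩ := hconj j hjJ
      rw [hjk] at hcj hlenyj
      -- hcj : y * cs.simple k * y⁻¹ = cs.simple j'
      -- hlenyj : cs.length (y * cs.simple k) = cs.length y + 1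
      have hu₀ : cs.length (cs.wordProd τ₀) = τ₀.length := hred₀
      have hπ : cs.wordProd (τ₀ ++ [k]) = cs.wordProd τ₀ * cs.simple k := by
        rw [wordProd_append, wordProd_singleton]
      have hu₀k : cs.length (cs.wordProd τ₀ * cs.simple k) = τ₀.length + 1 := by
        have : cs.length (cs.wordProd (τ₀ ++ [k])) = (τ₀ ++ [k]).length := hred
        rwa [hπ, List.length_append, List.length_singleton] at this
      have hν1 : cs.auxNu (cs.wordProd τ₀) (cs.simple k) = 0 :=
        (cs.auxNu_eq_zero_iff (cs.isReflection_simple k) _).mpr (by omega)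
      have htrefl : cs.IsReflection (cs.wordProd τ₀ * cs.simple k * (cs.wordProd τ₀)⁻¹) :=
        ⟨cs.wordProd τ₀, k, rfl⟩
      have hν2 : cs.auxNu w (cs.wordProd τ₀ * cs.simple k * (cs.wordProd τ₀)⁻¹) = 0 := by
        rcases zmod2_cases (cs.auxNu w (cs.wordProd τ₀ * cs.simple k * (cs.wordProd τ₀)⁻¹))
          with h | h
        · exact h
        exfalso
        have hlt := cs.auxNu_eq_one_of htrefl w h
        have hmemK' : ∀ b ∈ τ₀ ++ [k] ++ τ₀.reverse, b ∈ δI '' J := by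
          intro b hb
          rcases List.mem_append.mp hb with h' | h'
          · rcases List.mem_append.mp h' with h'' | h''
            · exact hK₀ b h''
            · rw [List.mem_singleton.mp h'']; exact hK k (by simp)
          · exact hK₀ b (List.mem_reverse.mp h')
        obtain ⟨ρ, hρK, hρred, hρπ⟩ := cs.exists_reduced_word_subset (δI '' J)
          (τ₀ ++ [k] ++ τ₀.reverse).length (τ₀ ++ [k] ++ τ₀.reverse) rfl hmemK'
        have hρt : cs.wordProd ρ = cs.wordProd τ₀ * cs.simple k * (cs.wordProd τ₀)⁻¹ := by
          rw [hρπ, wordProd_append, wordProd_append, wordProd_singleton, wordProd_reverse]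
        have hadd := cs.length_mul_parabolic_word w hw ρ hρK hρred
        have hρpos : 0 < ρ.length := by
          obtain ⟨m, hm⟩ := htrefl.odd_length
          have hthis : cs.length (cs.wordProd ρ) = ρ.length := hρred
          rw [hρt] at hthis
          omega
        rw [← hρt] at hlt
        omega
      have hν3 : cs.auxNu (w * cs.wordProd τ₀) (cs.simple k) = 0 := by
        rw [cs.auxNu_cocycle w (cs.wordProd τ₀) (cs.simple k), hν1, hν2, add_zero]
      have hν4 : cs.auxNu y⁻¹ (cs.simple j') = 0 := by
        apply (cs.auxNu_eq_zero_iff (cs.isReflection_simple j') y⁻¹).mpr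
        have e : y⁻¹ * cs.simple j' = cs.simple k * y⁻¹ := by rw [← hcj]; group
        have e2 : cs.length (cs.simple k * y⁻¹) = cs.length (y * cs.simple k) := by
          rw [← cs.length_inv (cs.simple k * y⁻¹), mul_inv_rev, inv_inv, cs.inv_simple]
        rw [e, e2, hlenyj, cs.length_inv]
        omega
      have hν5 : cs.auxNu (w * cs.wordProd τ₀ * y⁻¹) (cs.simple j') = 0 := by
        have hc := cs.auxNu_cocycle (w * cs.wordProd τ₀) y⁻¹ (cs.simple j')
        rw [show y⁻¹ * cs.simple j' * y⁻¹⁻¹ = cs.simple k from by rw [← hcj]; group] at hc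
        rw [hc, hν3, hν4, add_zero]
      have h6 : cs.length (w * cs.wordProd τ₀ * y⁻¹)
          < cs.length (w * cs.wordProd τ₀ * y⁻¹ * cs.simple j') :=
        (cs.auxNu_eq_zero_iff (cs.isReflection_simple j') _).mp hν5
      have h7 := cs.length_mul_simple (w * cs.wordProd τ₀ * y⁻¹) j'
      have h8 : w * cs.wordProd τ₀ * y⁻¹ * cs.simple j' = w * cs.wordProd (τ₀ ++ [k]) * y⁻¹ := by
        rw [hπ, ← hcj]
        group
      have ih' := ih hK₀ hred₀
      rw [← h8, List.length_append, List.length_singleton]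
      omega
  have hres := main ω hωK hωred
  rw [huω] at hres
  rw [hres, hulen]
end

section
/- Let W be a finite Coxeter group, J ⊆ I, y = w₀ w₀^{δ(J)} where δ is an automorphism of W permuting the simple reflections. For w ∈ W^{δ(J)} and u ∈ W_{δ(J)}, we have w y⁻¹ ∈ W^{J'} (where J' = yδ(J)y⁻¹ corresponds under the induced bijection of simple reflections) and ℓ(w u y⁻¹) = ℓ(w y⁻¹) + ℓ(u). -/
open CoxeterSystem
set_option autoImplicit false

variable {B W : Type*} [Group W] {M : CoxeterMatrix B} (cs : CoxeterSystem M W)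

open List

local prefix:100 "s" => cs.simple
local prefix:100 "π" => cs.wordProd
local prefix:100 "ℓ" => cs.length
local prefix:100 "ris" => cs.rightInvSeq

namespace SignRep

theorem conj_cancel (i : B) (t : W) : s i * (s i * t * s i) * s i = t := by
  have h1 : s i * t * s i = s i * (t * s i) := by rw [mul_assoc]
  rw [h1, cs.simple_mul_simple_cancel_left, cs.simple_mul_simple_cancel_right]

theorem conj_simple_iff (i : B) (t : W) : s i * t * s i = s i ↔ t = s i := by
  constructor
  · intro h
    have h1 : s i * (t * s i) = s i * 1 := by rw [mul_one, ← mul_assoc]; exact h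
    have h2 : t * s i = 1 := mul_left_cancel h1
    rw [eq_inv_of_mul_eq_one_left h2, cs.inv_simple]
  · rintro rfl
    rw [cs.simple_mul_simple_self, one_mul]

open Classical in
/-- The basic involution of `W × ℤˣ` attached to a simple reflection. -/
noncomputable def f (i : B) : Equiv.Perm (W × ℤˣ) :=
  Function.Involutive.toPerm
    (fun p => (s i * p.1 * s i, if p.1 = s i then -p.2 else p.2)) (by
      rintro ⟨t, ε⟩
      by_cases h : t = s i
      · subst h
        simp [conj_simple_iff, conj_cancel]
      · have h2 : ¬ (s i * t * s i = s i) := fun hc => h ((conj_simple_iff cs i t).mp hc)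
        simp only [h, h2, if_neg, if_false, conj_cancel]
      )

open Classical in
theorem f_apply (i : B) (t : W) (ε : ℤˣ) :
    f cs i (t, ε) = (s i * t * s i, if t = s i then -ε else ε) := rfl

/-- The reflections appearing in the dihedral orbit. -/
noncomputable def qq (i i' : B) (k : ℕ) : W := s i' * (s i * s i') ^ k

open Classical in
/-- A sign factor. -/
noncomputable def sg (i i' : B) (k : ℕ) (t : W) : ℤˣ := if t = qq cs i i' k then -1 else 1

private theorem conj_eq_iff (g q t : W) : g * t * g⁻¹ = q ↔ t = g⁻¹ * q * g := by
  constructor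
  · intro h; rw [← h]; group
  · intro h; rw [h]; group

theorem shiftq (i i' : B) (k : ℕ) :
    (s i * s i')⁻¹ * qq cs i i' k * (s i * s i') = qq cs i i' (k + 2) := by
  unfold qq
  rw [mul_inv_rev, cs.inv_simple, cs.inv_simple]
  calc s i' * s i * (s i' * (s i * s i') ^ k) * (s i * s i')
      = s i' * ((s i * s i') * ((s i * s i') ^ k * (s i * s i'))) := by
        simp only [mul_assoc]
    _ = s i' * (s i * s i') ^ (k + 2) := by
        rw [← pow_succ, ← pow_succ']

theorem condshift (i i' : B) (k : ℕ) (t : W) :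
    ((s i * s i') * t * (s i * s i')⁻¹ = qq cs i i' k) ↔ t = qq cs i i' (k + 2) := by
  rw [conj_eq_iff, ← shiftq cs i i' k, mul_assoc]

open Classical in
theorem liftable : M.IsLiftable (f cs) := by
  intro i i'
  set a := s i * s i' with ha
  -- single step
  have step : ∀ (t : W) (ε : ℤˣ), (f cs i * f cs i') (t, ε) =
      (a * t * a⁻¹, ε * sg cs i i' 0 t * sg cs i i' 1 t) := by
    intro t ε
    rw [Equiv.Perm.mul_apply, f_apply, f_apply]
    have e1 : s i * (s i' * t * s i') * s i = a * t * a⁻¹ := by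
      rw [ha, mul_inv_rev, cs.inv_simple, cs.inv_simple]; simp only [mul_assoc]
    have e0 : (t = s i') ↔ t = qq cs i i' 0 := by unfold qq; rw [pow_zero, mul_one]
    have e2 : (s i' * t * s i' = s i) ↔ t = qq cs i i' 1 := by
      unfold qq
      rw [pow_one]
      constructor
      · intro h
        have h3 : t = s i' * (s i' * t * s i') * s i' := (conj_cancel cs i' t).symm
        rw [h] at h3
        rw [h3, mul_assoc]
      · intro h
        rw [h, ← mul_assoc]
        have h4 : s i' * (s i' * (s i * s i')) = s i * s i' :=
          cs.simple_mul_simple_cancel_left i'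
        rw [mul_assoc (s i') (s i') (s i * s i'), h4, mul_assoc,
          cs.simple_mul_simple_self, mul_one]
    rw [Prod.mk.injEq]
    refine ⟨e1, ?_⟩
    unfold sg
    simp only [← e0, ← e2]
    by_cases h0 : t = s i' <;> by_cases h1 : s i' * t * s i' = s i <;>
      simp [h0, h1, mul_comm, mul_assoc]
  have conjpow : ∀ (g : W) (n : ℕ) (t : W),
      g ^ n * (g * t * g⁻¹) * (g ^ n)⁻¹ = g ^ (n + 1) * t * (g ^ (n + 1))⁻¹ := by
    intro g n t
    rw [pow_succ', mul_inv_rev]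
    group
  have key : ∀ (n : ℕ) (t : W) (ε : ℤˣ),
      ((f cs i * f cs i') ^ n) (t, ε) =
        (a ^ n * t * (a ^ n)⁻¹,
          ε * ∏ k ∈ Finset.range (2 * n), sg cs i i' k t) := by
    intro n
    induction n with
    | zero => intro t ε; simp
    | succ n ih =>
      intro t ε
      rw [pow_succ, Equiv.Perm.mul_apply, step, ih]
      rw [Prod.mk.injEq]
      constructor
      · exact conjpow a n t
      · have shift : ∀ k, sg cs i i' k (a * t * a⁻¹) = sg cs i i' (k + 2) t := by
          intro k
          unfold sg
          rw [ha, condshift]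
        simp only [shift]
        rw [show 2 * (n + 1) = 2 * n + 1 + 1 by ring, Finset.prod_range_succ',
          Finset.prod_range_succ']
        simp only [Nat.add_eq, Nat.zero_add]
        have hc : ∀ k, k + 1 + 1 = k + 2 := fun k => by ring
        simp only [hc]
        simp [mul_comm, mul_left_comm, mul_assoc]
  have final := key (M i i')
  apply Equiv.ext
  rintro ⟨t, ε⟩
  rw [final t ε]
  have hpow : a ^ M.M i i' = 1 := cs.simple_mul_simple_pow i i'
  rw [hpow]
  have per : ∀ k, sg cs i i' (M.M i i' + k) t = sg cs i i' k t := by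
    intro k
    unfold sg qq
    rw [pow_add, hpow, one_mul]
  rw [show 2 * M.M i i' = M.M i i' + M.M i i' by ring, Finset.prod_range_add]
  simp only [per]
  rw [Int.units_mul_self]
  simp

/-- The sign representation. -/
noncomputable def φ : W →* Equiv.Perm (W × ℤˣ) := cs.lift ⟨f cs, liftable cs⟩

theorem φ_simple (i : B) : φ cs (s i) = f cs i := cs.lift_apply_simple (liftable cs) i

theorem ris_cons (i : B) (ω : List B) :
    ris (i :: ω) = ((π ω)⁻¹ * s i * π ω) :: ris ω := rfl

theorem ris_append (α β : List B) :
    ris (α ++ β) = (ris α).map (fun x => (π β)⁻¹ * x * π β) ++ ris β := by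
  induction α with
  | nil => simp
  | cons i α ih =>
    rw [List.cons_append, ris_cons, ris_cons, ih, List.map_cons, List.cons_append]
    congr 1
    rw [cs.wordProd_append, mul_inv_rev]
    simp only [mul_assoc]

open Classical in
theorem phi_wordProd (ω : List B) (t : W) (ε : ℤˣ) :
    φ cs (π ω) (t, ε) = (π ω * t * (π ω)⁻¹, ε * (-1) ^ (List.count t (ris ω))) := by
  induction ω generalizing t ε with
  | nil => simp
  | cons i ω ih =>
    rw [cs.wordProd_cons, map_mul, Equiv.Perm.mul_apply, ih, φ_simple, f_apply]
    rw [ris_cons]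
    have hcond : (π ω * t * (π ω)⁻¹ = s i) ↔ ((π ω)⁻¹ * s i * π ω = t) := by
      rw [conj_eq_iff]; exact eq_comm
    rw [Prod.mk.injEq]
    constructor
    · rw [mul_inv_rev, cs.inv_simple]; simp only [mul_assoc]
    · by_cases hc : (π ω)⁻¹ * s i * π ω = t
      · rw [if_pos (hcond.mpr hc), hc, List.count_cons_self, pow_succ]
        rw [mul_neg_one, mul_neg]
      · rw [if_neg (fun hx => hc (hcond.mp hx)),
          List.count_cons_of_ne hc]

/-- The sign cocycle. -/
noncomputable def η (w t : W) : ℤˣ := (φ cs w (t, 1)).2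

open Classical in
theorem η_eq_count (w t : W) {ω : List B} (hω : π ω = w) :
    η cs w t = (-1) ^ (List.count t (ris ω)) := by
  unfold η
  rw [← hω, phi_wordProd, one_mul]

theorem phi_apply (w t : W) (ε : ℤˣ) :
    φ cs w (t, ε) = (w * t * w⁻¹, ε * η cs w t) := by
  classical
  obtain ⟨ω, hω⟩ := cs.wordProd_surjective w
  rw [← hω, phi_wordProd, η_eq_count cs (π ω) t rfl]

theorem η_mul (u v t : W) : η cs (u * v) t = η cs v t * η cs u (v * t * v⁻¹) := by
  unfold η
  rw [map_mul, Equiv.Perm.mul_apply, phi_apply, phi_apply, phi_apply, one_mul, one_mul]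

theorem η_one_or (w t : W) : η cs w t = 1 ∨ η cs w t = -1 := Int.units_eq_one_or _

theorem lis_eq_map_ris (ω : List B) :
    cs.leftInvSeq ω = (ris ω).map (fun x => π ω * x * (π ω)⁻¹) := by
  induction ω with
  | nil => simp
  | cons i ω ih =>
    rw [ris_cons, cs.wordProd_cons, List.map_cons]
    show s i :: List.map (MulAut.conj (s i)) (cs.leftInvSeq ω) = _
    congr 1
    · rw [mul_inv_rev, cs.inv_simple]
      simp only [mul_assoc, inv_mul_cancel_left, mul_inv_cancel_left]
      rw [cs.simple_mul_simple_self, mul_one]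
    · rw [ih, List.map_map]
      have hfun : (⇑(MulAut.conj (s i)) ∘ fun x => π ω * x * (π ω)⁻¹)
          = fun x => (s i * π ω) * x * (s i * π ω)⁻¹ := by
        funext x
        simp only [Function.comp_apply, MulAut.conj_apply, mul_inv_rev, cs.inv_simple]
        simp only [mul_assoc]
      rw [hfun]

open Classical in
theorem count_ris_reverse (ω : List B) (t : W) :
    List.count t (ris ω.reverse) = List.count ((π ω)⁻¹ * t * π ω) (ris ω) := by
  rw [cs.rightInvSeq_reverse, List.count_reverse, lis_eq_map_ris]
  have hinj : Function.Injective (fun x => π ω * x * (π ω)⁻¹) := by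
    intro x y hxy
    simp only at hxy
    exact mul_left_cancel (mul_right_cancel hxy)
  have h := List.count_map_of_injective (ris ω) _ hinj ((π ω)⁻¹ * t * π ω)
  have h2 : π ω * ((π ω)⁻¹ * t * π ω) * (π ω)⁻¹ = t := by
    simp only [mul_assoc, mul_inv_cancel, mul_one, mul_inv_cancel_left]
  rw [h2] at h
  exact h

open Classical in
theorem η_refl_self {t : W} (ht : cs.IsReflection t) : η cs t t = -1 := by
  obtain ⟨v, i, rfl⟩ := ht
  obtain ⟨c, hc⟩ := cs.wordProd_surjective v
  have hword : π (c ++ ([i] ++ c.reverse)) = v * s i * v⁻¹ := by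
    rw [cs.wordProd_append, cs.wordProd_append, cs.wordProd_singleton, cs.wordProd_reverse, hc,
      ← mul_assoc]
  rw [η_eq_count cs _ _ hword]
  have hris : ris (c ++ ([i] ++ c.reverse)) =
      (ris c).map (fun x => (π ([i] ++ c.reverse))⁻¹ * x * π ([i] ++ c.reverse))
        ++ ((v * s i * v⁻¹) :: ris c.reverse) := by
    rw [ris_append]
    congr 1
    rw [show ([i] ++ c.reverse) = i :: c.reverse from rfl, ris_cons]
    congr 1
    rw [cs.wordProd_reverse, hc]
    group
  rw [hris, List.count_append, List.count_cons_self]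
  have h1 : List.count (v * s i * v⁻¹)
      ((ris c).map (fun x => (π ([i] ++ c.reverse))⁻¹ * x * π ([i] ++ c.reverse)))
      = List.count (s i) (ris c) := by
    have hβ : π ([i] ++ c.reverse) = s i * v⁻¹ := by
      rw [cs.wordProd_append, cs.wordProd_singleton, cs.wordProd_reverse, hc]
    rw [hβ]
    have hinj : Function.Injective (fun x : W => (s i * v⁻¹)⁻¹ * x * (s i * v⁻¹)) := by
      intro x y hxy
      simp only at hxy
      exact mul_left_cancel (mul_right_cancel hxy)
    have h := List.count_map_of_injective (ris c) _ hinj (s i)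
    have heq : (s i * v⁻¹)⁻¹ * s i * (s i * v⁻¹) = v * s i * v⁻¹ := by
      rw [mul_inv_rev, cs.inv_simple, inv_inv]
      simp only [mul_assoc]
      rw [cs.simple_mul_simple_cancel_left]
    rw [heq] at h
    exact h
  have h2 : List.count (v * s i * v⁻¹) (ris c.reverse) = List.count (s i) (ris c) := by
    rw [count_ris_reverse, hc]
    congr 1
    simp only [mul_assoc, inv_mul_cancel_left, inv_mul_cancel, mul_one]
  rw [h1, h2]
  have h3 : List.count (s i) (ris c) + (List.count (s i) (ris c) + 1)
      = 2 * List.count (s i) (ris c) + 1 := by ring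
  rw [h3]
  exact Odd.neg_one_pow ⟨List.count (s i) (ris c), by ring⟩

open Classical in
theorem odd_count_of_η_neg {w t : W} {ω : List B} (hω : π ω = w) (h : η cs w t = -1) :
    Odd (List.count t (ris ω)) := by
  have hcount := η_eq_count cs w t hω
  rw [h] at hcount
  rcases Nat.even_or_odd (List.count t (ris ω)) with he | ho
  · rw [he.neg_one_pow] at hcount; exact absurd hcount (by decide)
  · exact ho

theorem inversion_of_η_neg {w t : W} (ht : cs.IsReflection t) (h : η cs w t = -1) :
    cs.IsRightInversion w t := by
  classical
  obtain ⟨ω, hred, hω⟩ := cs.exists_reduced_word' w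
  have hodd := odd_count_of_η_neg cs hω.symm h
  have hmem : t ∈ ris ω := List.count_pos_iff.mp hodd.pos
  have := cs.isRightInversion_of_mem_rightInvSeq hred hmem
  rwa [← hω] at this

theorem η_neg_of_inversion {w t : W} (h : cs.IsRightInversion w t) : η cs w t = -1 := by
  rcases η_one_or cs w t with h1 | h1
  · exfalso
    have ht := h.1
    have hη : η cs (w * t) t = -1 := by
      rw [η_mul]
      have h2 : t * t * t⁻¹ = t := by rw [ht.mul_self, one_mul, ht.inv]
      rw [h2, η_refl_self cs ht, h1, mul_one]
    have hinv := inversion_of_η_neg cs ht hη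
    have h2 := hinv.2
    rw [mul_assoc, ht.mul_self, mul_one] at h2
    exact lt_asymm h.2 h2
  · exact h1

theorem inversion_iff_η_neg {w t : W} (ht : cs.IsReflection t) :
    cs.IsRightInversion w t ↔ η cs w t = -1 :=
  ⟨η_neg_of_inversion cs, inversion_of_η_neg cs ht⟩

/-- The (right) exchange property. -/
theorem exchange {ω : List B} (hred : cs.IsReduced ω) {i : B}
    (h : ℓ (π ω * s i) < ℓ (π ω)) :
    ∃ j, ∃ _ : j < ω.length, π ω * s i = π (ω.eraseIdx j) := by
  classical
  have hinv : cs.IsRightInversion (π ω) (s i) := ⟨cs.isReflection_simple i, h⟩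
  have hη := η_neg_of_inversion cs hinv
  have hodd := odd_count_of_η_neg cs rfl hη
  have hmem : s i ∈ ris ω := List.count_pos_iff.mp hodd.pos
  obtain ⟨j, hj, hget⟩ := List.getElem_of_mem hmem
  rw [cs.length_rightInvSeq] at hj
  refine ⟨j, hj, ?_⟩
  have hh := cs.wordProd_mul_getD_rightInvSeq ω j
  rw [← hh]
  congr 1
  rw [← hget, List.getD_eq_getElem]

theorem isReduced_nil : cs.IsReduced ([] : List B) := by
  simp [CoxeterSystem.IsReduced]

/-- Any word can be reduced to a reduced sublist with the same product. -/
theorem reduceWord : ∀ (n : ℕ) (ω : List B), ω.length ≤ n →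
    ∃ ω', ω'.Sublist ω ∧ cs.IsReduced ω' ∧ π ω' = π ω := by
  intro n
  induction n with
  | zero =>
    intro ω hω
    rw [Nat.le_zero, List.length_eq_zero_iff] at hω
    subst hω
    exact ⟨[], List.Sublist.refl _, isReduced_nil cs, rfl⟩
  | succ n ih =>
    intro ω hω
    by_cases hred : cs.IsReduced ω
    · exact ⟨ω, List.Sublist.refl _, hred, rfl⟩
    have hne : ω ≠ [] := by
      rintro rfl
      exact hred (isReduced_nil cs)
    have hpos : 0 < ω.length := List.length_pos_iff.mpr hne
    have hex : ∃ j, ¬ cs.IsReduced (ω.take (j+1)) := by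
      refine ⟨ω.length - 1, ?_⟩
      rw [Nat.sub_add_cancel hpos, List.take_length]
      exact hred
    classical
    set j := Nat.find hex with hj
    have hjbad : ¬ cs.IsReduced (ω.take (j+1)) := Nat.find_spec hex
    have hjlt : j < ω.length := by
      have := Nat.find_min' hex (m := ω.length - 1) (by
        rw [Nat.sub_add_cancel hpos, List.take_length]; exact hred)
      omega
    have hredj : cs.IsReduced (ω.take j) := by
      rcases Nat.eq_zero_or_pos j with h0 | h0
      · rw [h0, List.take_zero]; exact isReduced_nil cs
      · have := Nat.find_min hex (m := j - 1) (by omega)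
        rw [not_not] at this
        have hh : j - 1 + 1 = j := by omega
        rwa [hh] at this
    have htakelen : (ω.take j).length = j := by
      rw [List.length_take]; omega
    have htake : ω.take (j+1) = ω.take j ++ [ω[j]] := by
      rw [List.take_succ, List.getElem?_eq_getElem hjlt]
      rfl
    have hprod1 : π (ω.take (j+1)) = π (ω.take j) * s (ω[j]) := by
      rw [htake, cs.wordProd_append, cs.wordProd_singleton]
    have hlenj : ℓ (π (ω.take j)) = j := by
      rw [hredj, htakelen]
    have hlt : ℓ (π (ω.take j) * s (ω[j])) < ℓ (π (ω.take j)) := by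
      rcases cs.length_mul_simple (π (ω.take j)) (ω[j]) with hc | hc
      · exfalso
        apply hjbad
        unfold CoxeterSystem.IsReduced
        rw [hprod1, hc, hlenj, List.length_take]
        omega
      · omega
    obtain ⟨j', hj', heq⟩ := exchange cs hredj hlt
    set A := (ω.take j).eraseIdx j' with hA
    have hAsub : A.Sublist (ω.take j) := List.eraseIdx_sublist _ j'
    have hAlen : A.length = j - 1 := by
      rw [hA, List.length_eraseIdx]
      rw [htakelen] at hj' ⊢
      simp [hj']
    set ω'' := A ++ ω.drop (j+1) with hω''
    have hsub'' : ω''.Sublist ω := by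
      have h1 : A.Sublist (ω.take (j+1)) := by
        refine hAsub.trans ?_
        rw [htake]
        exact List.sublist_append_left _ _
      calc ω'' = A ++ ω.drop (j+1) := rfl
        _ <+ ω.take (j+1) ++ ω.drop (j+1) := List.Sublist.append h1 (List.Sublist.refl _)
        _ = ω := List.take_append_drop _ _
    have hπ'' : π ω'' = π ω := by
      rw [hω'', cs.wordProd_append, ← heq, ← hprod1]
      conv_rhs => rw [← List.take_append_drop (j+1) ω]
      rw [cs.wordProd_append]
    have hlen'' : ω''.length ≤ n := by
      rw [hω'', List.length_append, hAlen, List.length_drop]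
      omega
    obtain ⟨ω', hs1, hs2, hs3⟩ := ih ω'' hlen''
    exact ⟨ω', hs1.trans hsub'', hs2, hs3.trans hπ''⟩

theorem parabolic_of_word (K : Set B) (ω : List B) (h : ∀ i ∈ ω, i ∈ K) :
    π ω ∈ cs.parabolic K := by
  induction ω with
  | nil => rw [cs.wordProd_nil]; exact one_mem _
  | cons i ω ih =>
    rw [cs.wordProd_cons]
    exact mul_mem (Subgroup.subset_closure ⟨i, h i (List.mem_cons_self), rfl⟩)
      (ih (fun i' hi' => h i' (List.mem_cons_of_mem _ hi')))

theorem word_of_parabolic (K : Set B) {w : W} (hw : w ∈ cs.parabolic K) :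
    ∃ ω : List B, (∀ i ∈ ω, i ∈ K) ∧ π ω = w := by
  induction hw using Subgroup.closure_induction with
  | mem x hx =>
    obtain ⟨i, hi, rfl⟩ := hx
    exact ⟨[i], by simpa using hi, cs.wordProd_singleton i⟩
  | one => exact ⟨[], by simp, cs.wordProd_nil⟩
  | mul x y hx hy ihx ihy =>
    obtain ⟨ω₁, h1, hp1⟩ := ihx
    obtain ⟨ω₂, h2, hp2⟩ := ihy
    refine ⟨ω₁ ++ ω₂, ?_, by rw [cs.wordProd_append, hp1, hp2]⟩
    intro i hi
    rcases List.mem_append.mp hi with h | h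
    · exact h1 i h
    · exact h2 i h
  | inv x hx ihx =>
    obtain ⟨ω₁, h1, hp1⟩ := ihx
    refine ⟨ω₁.reverse, ?_, by rw [cs.wordProd_reverse, hp1]⟩
    intro i hi
    exact h1 i (List.mem_reverse.mp hi)

theorem reduced_word_of_parabolic (K : Set B) {w : W} (hw : w ∈ cs.parabolic K) :
    ∃ ω : List B, (∀ i ∈ ω, i ∈ K) ∧ cs.IsReduced ω ∧ π ω = w := by
  obtain ⟨ω, hmem, hprod⟩ := word_of_parabolic cs K hw
  obtain ⟨ω', hsub, hred, hπ⟩ := reduceWord cs ω.length ω le_rfl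
  exact ⟨ω', fun i hi => hmem i (hsub.subset hi), hred, hπ.trans hprod⟩

theorem ris_mem_parabolic (K : Set B) {ω : List B} (h : ∀ i ∈ ω, i ∈ K) {t : W}
    (ht : t ∈ ris ω) : t ∈ cs.parabolic K := by
  induction ω with
  | nil => simp at ht
  | cons i ω ih =>
    rw [show ris (i :: ω) = ((π ω)⁻¹ * s i * π ω) :: ris ω from rfl] at ht
    rcases List.mem_cons.mp ht with h1 | h1
    · subst h1
      have hp : π ω ∈ cs.parabolic K :=
        parabolic_of_word cs K ω (fun i' hi' => h i' (List.mem_cons_of_mem _ hi'))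
      exact mul_mem (mul_mem (inv_mem hp)
        (Subgroup.subset_closure ⟨i, h i (List.mem_cons_self), rfl⟩)) hp
    · exact ih (fun i' hi' => h i' (List.mem_cons_of_mem _ hi')) h1


/-- The set of right inversions. -/
def RI (w : W) : Set W := {t | cs.IsRightInversion w t}

open Classical in
theorem length_eq_ncard_RI (w : W) : ℓ w = (RI cs w).ncard := by
  obtain ⟨ω, hred, hω⟩ := cs.exists_reduced_word' w
  have hset : RI cs w = ↑(ris ω).toFinset := by
    ext t
    simp only [RI, Set.mem_setOf_eq, Finset.coe_sort_coe, List.coe_toFinset, Set.mem_setOf_eq,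
      List.mem_toFinset]
    constructor
    · intro h
      have hη := η_neg_of_inversion cs h
      have hodd := odd_count_of_η_neg cs hω.symm hη
      exact List.count_pos_iff.mp hodd.pos
    · intro h
      have := cs.isRightInversion_of_mem_rightInvSeq hred h
      rwa [← hω] at this
  rw [hset, Set.ncard_coe_finset, List.toFinset_card_of_nodup hred.nodup_rightInvSeq,
    cs.length_rightInvSeq, hω]
  exact hred

theorem RI_subset_parabolic (K : Set B) {x : W} (hx : x ∈ cs.parabolic K) :
    RI cs x ⊆ {t | cs.IsReflection t ∧ t ∈ cs.parabolic K} := by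
  intro t ht
  obtain ⟨ω, hmem, hred, hω⟩ := reduced_word_of_parabolic cs K hx
  have hη := η_neg_of_inversion cs ht
  have hodd := odd_count_of_η_neg cs hω hη
  classical
  exact ⟨ht.1, ris_mem_parabolic cs K hmem (List.count_pos_iff.mp hodd.pos)⟩

private theorem inj_conj' {G : Type*} [Group G] (g : G) :
    Function.Injective (fun t : G => g⁻¹ * t * g) := by
  intro x y hxy
  simp only at hxy
  exact mul_left_cancel (mul_right_cancel hxy)

variable [Finite W]

/-- Key counting lemma: multiplying by the longest element of a parabolic subgroup. -/
theorem length_mul_max (K : Set B) (m : W) (hm : m ∈ cs.parabolic K)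
    (hmax : ∀ x ∈ cs.parabolic K, ℓ x ≤ ℓ m) (u : W) (hu : u ∈ cs.parabolic K) :
    ℓ (u * m) + ℓ u = ℓ m := by
  set R : Set W := {t | cs.IsReflection t ∧ t ∈ cs.parabolic K} with hR
  have hRIm : RI cs m = R := by
    apply Set.Subset.antisymm (RI_subset_parabolic cs K hm)
    rintro t ⟨htr, htp⟩
    refine ⟨htr, lt_of_le_of_ne (hmax _ (mul_mem hm htp)) (htr.length_mul_left_ne m)⟩
  have key : ∀ t, t ∈ R → (t ∈ RI cs (u * m) ↔ m * t * m⁻¹ ∉ RI cs u) := by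
    rintro t ⟨htr, htp⟩
    have htm : t ∈ RI cs m := by rw [hRIm]; exact ⟨htr, htp⟩
    have hηm : η cs m t = -1 := η_neg_of_inversion cs htm
    have hconj : cs.IsReflection (m * t * m⁻¹) := htr.conj m
    rw [show (t ∈ RI cs (u * m)) = cs.IsRightInversion (u * m) t from rfl,
      inversion_iff_η_neg cs htr, η_mul, hηm]
    rw [show (m * t * m⁻¹ ∈ RI cs u) = cs.IsRightInversion u (m * t * m⁻¹) from rfl,
      inversion_iff_η_neg cs hconj]
    rcases Int.units_eq_one_or (η cs u (m * t * m⁻¹)) with h1 | h1 <;> rw [h1] <;> simp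
  have hpart : R = RI cs (u * m) ∪ (fun t => m⁻¹ * t * m) '' RI cs u := by
    apply Set.Subset.antisymm
    · intro t ht
      by_cases hc : t ∈ RI cs (u * m)
      · exact Set.mem_union_left _ hc
      · apply Set.mem_union_right
        have := (key t ht).not.mp hc
        rw [not_not] at this
        exact ⟨m * t * m⁻¹, this, by simp only [mul_assoc, inv_mul_cancel_left,
          inv_mul_cancel, mul_one]⟩
    · apply Set.union_subset
      · exact RI_subset_parabolic cs K (mul_mem hu hm)
      · rintro t ⟨t', ht', rfl⟩
        have h2 := RI_subset_parabolic cs K hu ht'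
        refine ⟨?_, ?_⟩
        · have := h2.1.conj m⁻¹
          rwa [inv_inv] at this
        · exact mul_mem (mul_mem (inv_mem hm) h2.2) hm
  have hdisj : Disjoint (RI cs (u * m)) ((fun t => m⁻¹ * t * m) '' RI cs u) := by
    rw [Set.disjoint_left]
    rintro t ht ⟨t', ht', rfl⟩
    have htR : (m⁻¹ * t' * m) ∈ R := hpart ▸ Set.mem_union_left _ ht
    have := (key _ htR).mp ht
    apply this
    have hback : m * (m⁻¹ * t' * m) * m⁻¹ = t' := by
      simp only [mul_assoc, mul_inv_cancel_left, mul_inv_cancel, mul_one]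
    rwa [hback]
  have hcard : R.ncard = (RI cs (u * m)).ncard + (RI cs u).ncard := by
    rw [hpart, Set.ncard_union_eq hdisj (Set.toFinite _) (Set.toFinite _),
      Set.ncard_image_of_injective _ (inj_conj' m)]
  have hlm : ℓ m = R.ncard := by rw [length_eq_ncard_RI cs m, hRIm]
  rw [length_eq_ncard_RI cs (u * m), length_eq_ncard_RI cs u, hlm]
  exact hcard.symm

/-- Length additivity for an element with no inversions in the parabolic subgroup. -/
theorem length_add_of_no_parabolic_inversion (K : Set B) (v : W)
    (hv : ∀ t, cs.IsReflection t → t ∈ cs.parabolic K → ¬ cs.IsRightInversion v t)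
    (u : W) (hu : u ∈ cs.parabolic K) :
    ℓ (v * u) = ℓ v + ℓ u := by
  have hpart : RI cs (v * u) = RI cs u ∪ (fun t => u⁻¹ * t * u) '' RI cs v := by
    apply Set.Subset.antisymm
    · intro t ht
      have htr : cs.IsReflection t := ht.1
      have hη := η_neg_of_inversion cs ht
      rw [η_mul] at hη
      rcases Int.units_eq_one_or (η cs u t) with h1 | h1
      · rw [h1, one_mul] at hη
        apply Set.mem_union_right
        refine ⟨u * t * u⁻¹, inversion_of_η_neg cs (htr.conj u) hη, ?_⟩
        simp only [mul_assoc, inv_mul_cancel_left, inv_mul_cancel, mul_one]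
      · exact Set.mem_union_left _ (inversion_of_η_neg cs htr h1)
    · apply Set.union_subset
      · intro t ht
        have htR := RI_subset_parabolic cs K hu ht
        have hconj : cs.IsReflection (u * t * u⁻¹) := htR.1.conj u
        have hconjp : u * t * u⁻¹ ∈ cs.parabolic K :=
          mul_mem (mul_mem hu htR.2) (inv_mem hu)
        apply inversion_of_η_neg cs htR.1
        rw [η_mul, η_neg_of_inversion cs ht]
        have : η cs v (u * t * u⁻¹) = 1 := by
          rcases Int.units_eq_one_or (η cs v (u * t * u⁻¹)) with h1 | h1
          · exact h1
          · exact absurd (inversion_of_η_neg cs hconj h1) (hv _ hconj hconjp)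
        rw [this, mul_one]
      · rintro t ⟨t', ht', rfl⟩
        have htr' : cs.IsReflection t' := ht'.1
        have hconj : cs.IsReflection (u⁻¹ * t' * u) := by
          have := htr'.conj u⁻¹
          rwa [inv_inv] at this
        apply inversion_of_η_neg cs hconj
        rw [η_mul]
        have hback : u * (u⁻¹ * t' * u) * u⁻¹ = t' := by
          simp only [mul_assoc, mul_inv_cancel_left, mul_inv_cancel, mul_one]
        rw [hback, η_neg_of_inversion cs ht']
        have : η cs u (u⁻¹ * t' * u) = 1 := by
          rcases Int.units_eq_one_or (η cs u (u⁻¹ * t' * u)) with h1 | h1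
          · exact h1
          · exfalso
            have hinv := inversion_of_η_neg cs hconj h1
            have hR := RI_subset_parabolic cs K hu hinv
            have : t' ∈ cs.parabolic K := by
              have h3 := mul_mem (mul_mem hu hR.2) (inv_mem hu)
              rwa [hback] at h3
            exact hv t' htr' this ht'
        rw [this, one_mul]
  have hdisj : Disjoint (RI cs u) ((fun t => u⁻¹ * t * u) '' RI cs v) := by
    rw [Set.disjoint_left]
    rintro t ht ⟨t', ht', hconj⟩
    have htR := RI_subset_parabolic cs K hu ht
    have ht'p : t' ∈ cs.parabolic K := by
      have h3 := mul_mem (mul_mem hu htR.2) (inv_mem hu)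
      rw [← hconj] at h3
      have hback : u * (u⁻¹ * t' * u) * u⁻¹ = t' := by
        simp only [mul_assoc, mul_inv_cancel_left, mul_inv_cancel, mul_one]
      rwa [hback] at h3
    exact hv t' ht'.1 ht'p ht'
  rw [length_eq_ncard_RI cs (v * u), length_eq_ncard_RI cs u, length_eq_ncard_RI cs v, hpart,
    Set.ncard_union_eq hdisj (Set.toFinite _) (Set.toFinite _),
    Set.ncard_image_of_injective _ (inj_conj' u), Nat.add_comm]

/-- Length additivity for minimal coset representatives. -/
theorem length_add_of_minRight (K : Set B) (w : W) (hw : w ∈ cs.minRight K)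
    (u : W) (hu : u ∈ cs.parabolic K) :
    ℓ (w * u) = ℓ w + ℓ u := by
  classical
  set S : Set ℕ := {n | ∃ x ∈ cs.parabolic K, ℓ (w * x) = n} with hS
  have hSne : S.Nonempty := ⟨ℓ (w * 1), 1, one_mem _, rfl⟩
  obtain ⟨u₀, hu₀, hlen₀⟩ := Nat.sInf_mem hSne
  set v := w * u₀ with hv
  have hvmin : ∀ x ∈ cs.parabolic K, ℓ v ≤ ℓ (w * x) := by
    intro x hx
    rw [hv, hlen₀]
    exact Nat.sInf_le ⟨x, hx, rfl⟩
  have hvQ : ∀ t, cs.IsReflection t → t ∈ cs.parabolic K → ¬ cs.IsRightInversion v t := by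
    intro t htr htp ⟨_, hlt⟩
    have h1 : v * t = w * (u₀ * t) := by rw [hv, mul_assoc]
    rw [h1] at hlt
    exact absurd (hvmin _ (mul_mem hu₀ htp)) (by omega)
  have hN := length_add_of_no_parabolic_inversion cs K v hvQ
  -- show u₀ = 1, so that v = w
  have hu₀inv : u₀⁻¹ ∈ cs.parabolic K := inv_mem hu₀
  have hwv : w = v * u₀⁻¹ := by rw [hv, mul_assoc, mul_inv_cancel, mul_one]
  have hone : u₀ = 1 := by
    by_contra hne
    obtain ⟨χ, hχK, hχred, hχprod⟩ := reduced_word_of_parabolic cs K hu₀inv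
    have hχne : χ ≠ [] := by
      rintro rfl
      rw [cs.wordProd_nil] at hχprod
      exact hne (by rw [← inv_inv u₀, ← hχprod, inv_one])
    -- last letter of χ
    set k := χ.getLast hχne with hk
    have hkK : k ∈ K := hχK k (List.getLast_mem hχne)
    have hsplit : χ = χ.dropLast ++ [k] := (List.dropLast_append_getLast hχne).symm
    have hp : u₀⁻¹ * s k = π χ.dropLast := by
      rw [← hχprod]
      conv_lhs => rw [hsplit]
      rw [cs.wordProd_append, cs.wordProd_singleton, mul_assoc, cs.simple_mul_simple_self,
        mul_one]
    have hdrop_red : cs.IsReduced χ.dropLast := by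
      rw [List.dropLast_eq_take]
      exact hχred.take _
    have hdl : (χ.dropLast).length = χ.length - 1 := List.length_dropLast
    have hχpos : 0 < χ.length := List.length_pos_iff.mpr hχne
    have hlen1 : ℓ (u₀⁻¹ * s k) = ℓ u₀⁻¹ - 1 := by
      rw [hp, hdrop_red, hdl, ← hχprod, hχred]
    have hlen2 : ℓ u₀⁻¹ = χ.length := by rw [← hχprod, hχred]
    have hws : w * s k = v * (u₀⁻¹ * s k) := by
      rw [hwv, mul_assoc]
    have hle : ℓ (w * s k) = ℓ v + (ℓ u₀⁻¹ - 1) := by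
      rw [hws, hN _ (mul_mem hu₀inv (Subgroup.subset_closure ⟨k, hkK, rfl⟩)), hlen1]
    have hwlen : ℓ w = ℓ v + ℓ u₀⁻¹ := by
      rw [hwv, hN _ hu₀inv]
    have := hw k hkK
    omega
  have hvw : v = w := by rw [hv, hone, mul_one]
  have hfin := hN u hu
  rw [hvw] at hfin
  exact hfin


end SignRep


/-- With `y = w₀ · w₀^{δ(J)}`, for `w ∈ W^{δ(J)}` and `u ∈ W_{δ(J)}` one has
`w y⁻¹ ∈ W^{J'}` and `ℓ(w u y⁻¹) = ℓ(w y⁻¹) + ℓ(u)`, where `J'` corresponds to `δ(J)`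
under the bijection of simple reflections induced by `w₀`. -/
theorem length_additive_wuy [Finite W] (δ : W ≃* W) (δI : B ≃ B)
    (hδ : ∀ i, δ (cs.simple i) = cs.simple (δI i)) (J : Set B)
    (w₀ : W) (hw₀ : ∀ v : W, cs.length v ≤ cs.length w₀)
    (w₀J : W) (hw₀Jmem : w₀J ∈ cs.parabolic (δI '' J))
    (hw₀J : ∀ u ∈ cs.parabolic (δI '' J), cs.length u ≤ cs.length w₀J)
    (J' : Set B) (hJ' : J' = {i : B | ∃ j ∈ J, cs.simple i = w₀ * cs.simple (δI j) * w₀})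
    (y : W) (hy : y = w₀ * w₀J)
    (w : W) (hw : w ∈ cs.minRight (δI '' J))
    (u : W) (hu : u ∈ cs.parabolic (δI '' J)) :
    w * y⁻¹ ∈ cs.minRight J' ∧
    cs.length (w * u * y⁻¹) = cs.length (w * y⁻¹) + cs.length u := by
  set K := δI '' J with hK
  have hTop : ∀ x : W, x ∈ cs.parabolic (Set.univ : Set B) := by
    intro x
    unfold CoxeterSystem.parabolic
    rw [Set.image_univ, cs.subgroup_closure_range_simple]
    trivial
  have hG1 : ∀ x : W, ℓ (x * w₀) + ℓ x = ℓ w₀ := fun x =>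
    SignRep.length_mul_max cs Set.univ w₀ (hTop w₀) (fun x _ => hw₀ x) x (hTop x)
  have hG2 : ∀ x ∈ cs.parabolic K, ℓ (x * w₀J) + ℓ x = ℓ w₀J := fun x hx =>
    SignRep.length_mul_max cs K w₀J hw₀Jmem hw₀J x hx
  have hN : ∀ x ∈ cs.parabolic K, ℓ (w * x) = ℓ w + ℓ x := fun x hx =>
    SignRep.length_add_of_minRight cs K w hw x hx
  have hw₀sq : w₀ * w₀ = 1 := by
    apply cs.length_eq_zero_iff.mp
    have := hG1 w₀
    omega
  have hw₀Jsq : w₀J * w₀J = 1 := by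
    apply cs.length_eq_zero_iff.mp
    have := hG2 w₀J hw₀Jmem
    omega
  have hyinv : y⁻¹ = w₀J * w₀ := by
    apply inv_eq_of_mul_eq_one_right
    rw [hy, mul_assoc w₀ w₀J (w₀J * w₀), ← mul_assoc w₀J w₀J w₀, hw₀Jsq, one_mul, hw₀sq]
  have hcl : ∀ x : W, w₀ * (w₀ * x) = x := fun x => by rw [← mul_assoc, hw₀sq, one_mul]
  have hA5 : ℓ (w * w₀J) = ℓ w + ℓ w₀J := hN w₀J hw₀Jmem
  have hA4 : ℓ (w * y⁻¹) + ℓ (w * w₀J) = ℓ w₀ := by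
    have he : (w * w₀J) * w₀ = w * y⁻¹ := by rw [hyinv, mul_assoc]
    have := hG1 (w * w₀J)
    rwa [he] at this
  constructor
  · -- minRight J'
    intro i hi
    rw [hJ'] at hi
    obtain ⟨j, hjJ, hsi⟩ := hi
    set k := δI j with hk
    have hkK : k ∈ K := ⟨j, hjJ, rfl⟩
    have hks : w₀J * s k ∈ cs.parabolic K :=
      mul_mem hw₀Jmem (Subgroup.subset_closure ⟨k, hkK, rfl⟩)
    have hB3 : ℓ (w₀J * s k) + 1 = ℓ w₀J := by
      rcases cs.length_mul_simple w₀J k with hc | hc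
      · exfalso
        have := hw₀J _ hks
        omega
      · exact hc
    have hB2 : ℓ (w * (w₀J * s k)) = ℓ w + ℓ (w₀J * s k) := hN _ hks
    have hB1 : ℓ (w * y⁻¹ * s i) + ℓ (w * (w₀J * s k)) = ℓ w₀ := by
      have he3 : (w * (w₀J * s k)) * w₀ = w * y⁻¹ * s i := by
        rw [hsi, hyinv]
        simp only [mul_assoc]
        rw [hcl]
      have := hG1 (w * (w₀J * s k))
      rwa [he3] at this
    show ℓ (w * y⁻¹) < ℓ (w * y⁻¹ * s i)
    omega
  · -- length additivity
    have hA3 : ℓ (u * w₀J) + ℓ u = ℓ w₀J := hG2 u hu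
    have hA2 : ℓ (w * (u * w₀J)) = ℓ w + ℓ (u * w₀J) := hN _ (mul_mem hu hw₀Jmem)
    have hA1 : ℓ (w * u * y⁻¹) + ℓ (w * (u * w₀J)) = ℓ w₀ := by
      have he2 : (w * (u * w₀J)) * w₀ = w * u * y⁻¹ := by
        rw [hyinv]
        simp only [mul_assoc]
      have := hG1 (w * (u * w₀J))
      rwa [he2] at this
    omega
end
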